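/- If for all N and all complex tuples (a_n)_{n=1}^N there holds ∑_{n=1}^N |a_n| ≤ c N^{σ₀} ∫₀¹ |∑_{n=1}^N r_n(t) a_n| dt, and additionally (by Khinchin) ∫₀¹|∑_n r_n(t)a_n| dt ≤ (∑_n|a_n|²)^{1/2}, then taking a_n = 1 for all n gives N ≤ c N^{σ₀} N^{1/2}, hence σ₀ ≥ 1/2. Thus Hartman's constant S^rad_{c→a}(ℂ) = sup over Dirichlet series D of σ_a(D) − σ^rad_c(D) satisfies S^rad_{c→a}(ℂ) ≥ 1/2, and combined with the Cauchy–Schwarz upper bound, S^rad_{c→a}(ℂ) = 1/2. -/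

import Mathlib

open MeasureTheory Filter Finset

noncomputable def rad (n : ℕ) (t : ℝ) : ℝ :=
  if Int.fract ((2 ^ n : ℝ) * t) < 1 / 2 then 1 else -1

lemma rad_measurable (n : ℕ) : Measurable (rad n) := by
  unfold rad
  exact Measurable.ite
    (measurableSet_lt ((measurable_const.mul measurable_id).fract) measurable_const)
    measurable_const measurable_const

lemma abs_rad (n : ℕ) (t : ℝ) : |rad n t| = 1 := by unfold rad; split <;> simp

lemma rad_succ (n : ℕ) (t : ℝ) : rad (n+1) t = rad n (2*t) := by
  unfold rad
  have : (2:ℝ)^(n+1) * t = 2^n * (2*t) := by ring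
  rw [this]

lemma rad_add_one (n : ℕ) (t : ℝ) : rad n (t+1) = rad n t := by
  unfold rad
  have : (2:ℝ)^n * (t+1) = 2^n * t + ((2^n : ℤ) : ℝ) := by push_cast; ring
  rw [this, Int.fract_add_intCast]

lemma rad_zero_left {t : ℝ} (h0 : 0 ≤ t) (h1 : t < 1/2) : rad 0 t = 1 := by
  unfold rad
  rw [pow_zero, one_mul, Int.fract_eq_self.2 ⟨h0, by linarith⟩]
  exact if_pos h1

lemma rad_zero_right {t : ℝ} (h0 : 1/2 ≤ t) (h1 : t < 1) : rad 0 t = -1 := by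
  unfold rad
  rw [pow_zero, one_mul, Int.fract_eq_self.2 ⟨by linarith, h1⟩]
  exact if_neg (not_lt.2 h0)

/-- Integrability of a continuous function composed with a bounded measurable function. -/
lemma II {G : ℝ → ℝ} (hG : Continuous G) {F : ℝ → ℝ} (hF : Measurable F) {C : ℝ}
    (hC : ∀ t, |F t| ≤ C) (a b : ℝ) :
    IntervalIntegrable (fun t => G (F t)) volume a b := by
  obtain ⟨M, hM⟩ := (isCompact_Icc (a := -C) (b := C)).exists_bound_of_continuousOn
    hG.continuousOn
  refine (intervalIntegrable_const (c := M)).mono_fun'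
    ((hG.measurable.comp hF).aestronglyMeasurable) ?_
  filter_upwards with t
  exact hM _ (abs_le.1 (hC t))

lemma S_measurable (x : ℕ → ℝ) (N : ℕ) :
    Measurable (fun t => ∑ n ∈ range N, rad n t * x n) :=
  Finset.measurable_sum (range N) fun n _ => (rad_measurable n).mul measurable_const

lemma S_bound (x : ℕ → ℝ) (N : ℕ) (t : ℝ) :
    |∑ n ∈ range N, rad n t * x n| ≤ ∑ n ∈ range N, |x n| := by
  refine (Finset.abs_sum_le_sum_abs _ _).trans ?_
  refine Finset.sum_le_sum fun n _ => ?_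
  rw [abs_mul, abs_rad, one_mul]

lemma II_comp {G : ℝ → ℝ} (hG : Continuous G) (x : ℕ → ℝ) (N : ℕ) (a b : ℝ) :
    IntervalIntegrable (fun t => G (∑ n ∈ range N, rad n t * x n)) volume a b :=
  II hG (S_measurable x N) (S_bound x N) a b

lemma ae_ne (c : ℝ) : ∀ᵐ t : ℝ, t ≠ c := by
  have h : (volume : Measure ℝ) {c} = 0 := measure_singleton c
  have := measure_eq_zero_iff_ae_notMem.mp h
  filter_upwards [this] with t ht
  simpa using ht

lemma rec_step {G : ℝ → ℝ} (hG : Continuous G) (x : ℕ → ℝ) (N : ℕ) :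
    ∫ t in (0:ℝ)..1, G (∑ n ∈ range (N+1), rad n t * x n)
      = (1/2) * (∫ u in (0:ℝ)..1, G (x 0 + ∑ n ∈ range N, rad n u * x (n+1)))
      + (1/2) * (∫ u in (0:ℝ)..1, G (- x 0 + ∑ n ∈ range N, rad n u * x (n+1))) := by
  have hsplit : ∫ t in (0:ℝ)..1, G (∑ n ∈ range (N+1), rad n t * x n)
      = (∫ t in (0:ℝ)..(1/2), G (∑ n ∈ range (N+1), rad n t * x n))
        + ∫ t in (1/2:ℝ)..1, G (∑ n ∈ range (N+1), rad n t * x n) :=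
    (intervalIntegral.integral_add_adjacent_intervals
      (II_comp hG x (N+1) 0 (1/2)) (II_comp hG x (N+1) (1/2) 1)).symm
  have hL : (∫ t in (0:ℝ)..(1/2), G (∑ n ∈ range (N+1), rad n t * x n))
      = ∫ t in (0:ℝ)..(1/2), G (x 0 + ∑ n ∈ range N, rad n (2*t) * x (n+1)) := by
    refine intervalIntegral.integral_congr_ae ?_
    filter_upwards [ae_ne (1/2 : ℝ)] with t ht htI
    rw [Set.uIoc_of_le (by norm_num : (0:ℝ) ≤ 1/2)] at htI
    have ht2 : t < 1/2 := lt_of_le_of_ne htI.2 ht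
    congr 1
    rw [Finset.sum_range_succ']
    simp only [rad_succ]
    rw [rad_zero_left (le_of_lt htI.1) ht2, one_mul, add_comm]
  have hR : (∫ t in (1/2:ℝ)..1, G (∑ n ∈ range (N+1), rad n t * x n))
      = ∫ t in (1/2:ℝ)..1, G (- x 0 + ∑ n ∈ range N, rad n (2*t - 1) * x (n+1)) := by
    refine intervalIntegral.integral_congr_ae ?_
    filter_upwards [ae_ne (1:ℝ)] with t ht htI
    rw [Set.uIoc_of_le (by norm_num : (1/2:ℝ) ≤ 1)] at htI
    have ht2 : t < 1 := lt_of_le_of_ne htI.2 ht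
    congr 1
    rw [Finset.sum_range_succ']
    simp only [rad_succ]
    rw [rad_zero_right (le_of_lt htI.1) ht2]
    have h21 : ∀ n, rad n (2*t) = rad n (2*t-1) := by
      intro n
      rw [← rad_add_one n (2*t-1)]
      ring_nf
    simp only [h21]
    ring
  -- substitute u = 2t on the left piece
  have hL2 : (∫ t in (0:ℝ)..(1/2), G (x 0 + ∑ n ∈ range N, rad n (2*t) * x (n+1)))
      = (1/2) * ∫ u in (0:ℝ)..1, G (x 0 + ∑ n ∈ range N, rad n u * x (n+1)) := by
    have := intervalIntegral.integral_comp_mul_left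
      (f := fun u => G (x 0 + ∑ n ∈ range N, rad n u * x (n+1)))
      (a := (0:ℝ)) (b := (1/2:ℝ)) (c := (2:ℝ)) two_ne_zero
    rw [this]
    norm_num
  have hR2 : (∫ t in (1/2:ℝ)..1, G (- x 0 + ∑ n ∈ range N, rad n (2*t-1) * x (n+1)))
      = (1/2) * ∫ u in (0:ℝ)..1, G (- x 0 + ∑ n ∈ range N, rad n u * x (n+1)) := by
    have h1 := intervalIntegral.integral_comp_mul_left
      (f := fun s => G (- x 0 + ∑ n ∈ range N, rad n (s-1) * x (n+1)))
      (a := (1/2:ℝ)) (b := (1:ℝ)) (c := (2:ℝ)) two_ne_zero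
    have h2 := intervalIntegral.integral_comp_sub_right
      (f := fun u => G (- x 0 + ∑ n ∈ range N, rad n u * x (n+1)))
      (a := (1:ℝ)) (b := (2:ℝ)) 1
    simp only [show (2:ℝ)*(1/2) = 1 by norm_num, show (2:ℝ)*1 = 2 by norm_num] at h1
    rw [h1]
    norm_num at h2 ⊢
    rw [h2]
  rw [hsplit, hL, hR, hL2, hR2]

lemma integral_S_sq (x : ℕ → ℝ) (N : ℕ) :
    ∫ t in (0:ℝ)..1, (∑ n ∈ range N, rad n t * x n)^2 = ∑ n ∈ range N, x n ^ 2 := by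
  induction N generalizing x with
  | zero => simp
  | succ N ih =>
    rw [rec_step (continuous_pow 2) x N]
    have hcont1 : Continuous (fun y : ℝ => (x 0 + y)^2) := by continuity
    have hcont2 : Continuous (fun y : ℝ => (- x 0 + y)^2) := by continuity
    have hadd := intervalIntegral.integral_add
      (II_comp hcont1 (fun n => x (n+1)) N 0 1) (II_comp hcont2 (fun n => x (n+1)) N 0 1)
    have hpt : (fun t => (x 0 + ∑ n ∈ range N, rad n t * x (n+1))^2
        + (- x 0 + ∑ n ∈ range N, rad n t * x (n+1))^2)
        = fun t => 2 * (∑ n ∈ range N, rad n t * x (n+1))^2 + 2 * x 0 ^2 := by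
      funext t; ring
    rw [hpt] at hadd
    have hadd2 := intervalIntegral.integral_add
      ((II_comp (continuous_pow 2) (fun n => x (n+1)) N 0 1).const_mul 2)
      (intervalIntegrable_const (c := 2 * x 0 ^2))
    rw [hadd2, intervalIntegral.integral_const_mul, ih, intervalIntegral.integral_const] at hadd
    rw [Finset.sum_range_succ']
    simp only [smul_eq_mul] at hadd
    linarith [hadd]

lemma integral_S_four (x : ℕ → ℝ) (N : ℕ) :
    ∫ t in (0:ℝ)..1, (∑ n ∈ range N, rad n t * x n)^4
      ≤ 3 * (∑ n ∈ range N, x n ^ 2)^2 := by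
  induction N generalizing x with
  | zero => simp
  | succ N ih =>
    rw [rec_step (continuous_pow 4) x N]
    have hcont1 : Continuous (fun y : ℝ => (x 0 + y)^4) := by continuity
    have hcont2 : Continuous (fun y : ℝ => (- x 0 + y)^4) := by continuity
    have hadd := intervalIntegral.integral_add
      (II_comp hcont1 (fun n => x (n+1)) N 0 1) (II_comp hcont2 (fun n => x (n+1)) N 0 1)
    have hpt : (fun t => (x 0 + ∑ n ∈ range N, rad n t * x (n+1))^4
        + (- x 0 + ∑ n ∈ range N, rad n t * x (n+1))^4)
        = fun t => 2 * (∑ n ∈ range N, rad n t * x (n+1))^4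
          + (12 * x 0 ^2 * (∑ n ∈ range N, rad n t * x (n+1))^2 + 2 * x 0 ^4) := by
      funext t; ring
    rw [hpt] at hadd
    have hadd2 := intervalIntegral.integral_add
      ((II_comp (continuous_pow 4) (fun n => x (n+1)) N 0 1).const_mul 2)
      (((II_comp (continuous_pow 2) (fun n => x (n+1)) N 0 1).const_mul
          (12 * x 0 ^2)).add (intervalIntegrable_const (c := 2 * x 0 ^4)))
    rw [hadd2] at hadd
    rw [intervalIntegral.integral_add
      ((II_comp (continuous_pow 2) (fun n => x (n+1)) N 0 1).const_mul (12 * x 0 ^2))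
      (intervalIntegrable_const (c := 2 * x 0 ^4))] at hadd
    rw [intervalIntegral.integral_const_mul, intervalIntegral.integral_const_mul,
      integral_S_sq, intervalIntegral.integral_const] at hadd
    simp only [smul_eq_mul] at hadd
    rw [Finset.sum_range_succ']
    have ihs := ih (fun n => x (n+1))
    have hQ : (0:ℝ) ≤ ∑ n ∈ range N, x (n+1) ^ 2 :=
      Finset.sum_nonneg fun n _ => sq_nonneg _
    nlinarith [hadd, ihs, hQ, sq_nonneg (x 0), sq_nonneg (x 0 ^ 2)]

lemma cs_int {f g : ℝ → ℝ}
    (hf2 : IntervalIntegrable (fun t => f t ^ 2) volume 0 1)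
    (hg2 : IntervalIntegrable (fun t => g t ^ 2) volume 0 1)
    (hfg : IntervalIntegrable (fun t => f t * g t) volume 0 1) :
    (∫ t in (0:ℝ)..1, f t * g t)^2
      ≤ (∫ t in (0:ℝ)..1, f t ^ 2) * ∫ t in (0:ℝ)..1, g t ^ 2 := by
  set P := ∫ t in (0:ℝ)..1, f t ^ 2 with hP
  set R := ∫ t in (0:ℝ)..1, f t * g t with hR
  set Q := ∫ t in (0:ℝ)..1, g t ^ 2 with hQ
  have key : ∀ lam : ℝ, 0 ≤ P * (lam * lam) + (-2*R) * lam + Q := by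
    intro lam
    have h0 : (0:ℝ) ≤ ∫ t in (0:ℝ)..1, (lam * f t - g t)^2 :=
      intervalIntegral.integral_nonneg (by norm_num) (fun u _ => sq_nonneg _)
    have hpt : (fun t => (lam * f t - g t)^2)
        = fun t => lam^2 * (f t ^2) + ((-2*lam) * (f t * g t) + g t ^2) := by
      funext t; ring
    rw [hpt] at h0
    rw [intervalIntegral.integral_add (hf2.const_mul _) ((hfg.const_mul _).add hg2),
      intervalIntegral.integral_add (hfg.const_mul _) hg2,
      intervalIntegral.integral_const_mul, intervalIntegral.integral_const_mul] at h0
    nlinarith [h0]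
  have hd := discrim_le_zero key
  rw [discrim] at hd
  nlinarith [hd]

lemma khinchin_real (x : ℕ → ℝ) (N : ℕ) :
    Real.sqrt (∑ n ∈ range N, x n ^ 2)
      ≤ Real.sqrt 3 * ∫ t in (0:ℝ)..1, |∑ n ∈ range N, rad n t * x n| := by
  set S : ℝ → ℝ := fun t => ∑ n ∈ range N, rad n t * x n with hS
  set A := ∫ t in (0:ℝ)..1, |S t| with hA
  set B := ∑ n ∈ range N, x n ^ 2 with hB
  set C := ∫ t in (0:ℝ)..1, S t ^ 4 with hC
  set D := ∫ t in (0:ℝ)..1, |S t| ^ 3 with hD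
  have hintB : (∫ t in (0:ℝ)..1, S t ^ 2) = B := integral_S_sq x N
  have hA0 : 0 ≤ A := intervalIntegral.integral_nonneg (by norm_num) fun u _ => abs_nonneg _
  have hD0 : 0 ≤ D := intervalIntegral.integral_nonneg (by norm_num) fun u _ =>
    pow_nonneg (abs_nonneg _) 3
  have hB0 : 0 ≤ B := Finset.sum_nonneg fun n _ => sq_nonneg _
  have hCB : C ≤ 3 * B ^ 2 := integral_S_four x N
  -- Cauchy-Schwarz 1 : B^2 ≤ A * D
  have hCS1 : B ^ 2 ≤ A * D := by
    have c0 : Continuous fun y : ℝ => Real.sqrt |y| := Real.continuous_sqrt.comp continuous_abs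
    have i1 : IntervalIntegrable (fun t => (Real.sqrt |S t|) ^ 2) volume 0 1 :=
      II_comp (G := fun y => (Real.sqrt |y|) ^ 2) (c0.pow 2) x N 0 1
    have i2 : IntervalIntegrable (fun t => (|S t| * Real.sqrt |S t|) ^ 2) volume 0 1 :=
      II_comp (G := fun y => (|y| * Real.sqrt |y|) ^ 2) ((continuous_abs.mul c0).pow 2) x N 0 1
    have i3 : IntervalIntegrable
        (fun t => Real.sqrt |S t| * (|S t| * Real.sqrt |S t|)) volume 0 1 :=
      II_comp (G := fun y => Real.sqrt |y| * (|y| * Real.sqrt |y|))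
        (c0.mul (continuous_abs.mul c0)) x N 0 1
    have h := cs_int i1 i2 i3
    have e1 : (fun t => Real.sqrt |S t| * (|S t| * Real.sqrt |S t|)) = fun t => S t ^ 2 := by
      funext t
      rw [show Real.sqrt |S t| * (|S t| * Real.sqrt |S t|)
          = (Real.sqrt |S t| * Real.sqrt |S t|) * |S t| by ring,
        Real.mul_self_sqrt (abs_nonneg _), ← sq_abs]
      ring
    have e2 : (fun t => (Real.sqrt |S t|) ^ 2) = fun t => |S t| := by
      funext t; rw [Real.sq_sqrt (abs_nonneg _)]
    have e3 : (fun t => (|S t| * Real.sqrt |S t|) ^ 2) = fun t => |S t| ^ 3 := by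
      funext t
      rw [mul_pow, Real.sq_sqrt (abs_nonneg _)]
      ring
    rw [e1, e2, e3, hintB] at h
    exact h
  -- Cauchy-Schwarz 2 : D^2 ≤ B * C
  have hCS2 : D ^ 2 ≤ B * C := by
    have i1 : IntervalIntegrable (fun t => |S t| ^ 2) volume 0 1 :=
      II_comp (G := fun y => |y| ^ 2) (continuous_abs.pow 2) x N 0 1
    have i2 : IntervalIntegrable (fun t => (S t ^ 2) ^ 2) volume 0 1 :=
      II_comp (G := fun y => (y ^ 2) ^ 2) ((continuous_pow 2).pow 2) x N 0 1
    have i3 : IntervalIntegrable (fun t => |S t| * S t ^ 2) volume 0 1 :=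
      II_comp (G := fun y => |y| * y ^ 2) (continuous_abs.mul (continuous_pow 2)) x N 0 1
    have h := cs_int i1 i2 i3
    have e1 : (fun t => |S t| * S t ^ 2) = fun t => |S t| ^ 3 := by
      funext t; rw [← sq_abs]; ring
    have e2 : (fun t => |S t| ^ 2) = fun t => S t ^ 2 := by
      funext t; rw [sq_abs]
    have e3 : (fun t => (S t ^ 2) ^ 2) = fun t => S t ^ 4 := by
      funext t; ring
    rw [e1, e2, e3, hintB] at h
    exact h
  rcases eq_or_lt_of_le hB0 with h0 | hBpos
  · rw [← h0]
    simpa using mul_nonneg (Real.sqrt_nonneg 3) hA0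
  · have h4 : B ^ 4 ≤ 3 * A ^ 2 * B ^ 3 := by
      have e1 : B ^ 2 * B ^ 2 ≤ (A * D) * (A * D) :=
        mul_le_mul hCS1 hCS1 (sq_nonneg B) (mul_nonneg hA0 hD0)
      have e2 : A ^ 2 * D ^ 2 ≤ A ^ 2 * (B * C) :=
        mul_le_mul_of_nonneg_left hCS2 (sq_nonneg A)
      have e3 : A ^ 2 * (B * C) ≤ A ^ 2 * (B * (3 * B ^ 2)) :=
        mul_le_mul_of_nonneg_left (mul_le_mul_of_nonneg_left hCB hB0) (sq_nonneg A)
      nlinarith [e1, e2, e3]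
    have hBA : B ≤ 3 * A ^ 2 := by
      by_contra hc
      push_neg at hc
      have := mul_lt_mul_of_pos_right hc (pow_pos hBpos 3)
      nlinarith [h4, this]
    calc Real.sqrt B ≤ Real.sqrt (3 * A ^ 2) := Real.sqrt_le_sqrt hBA
      _ = Real.sqrt 3 * A := by
          rw [Real.sqrt_mul (by norm_num), Real.sqrt_sq hA0]

lemma SC_measurable (a : ℕ → ℂ) (N : ℕ) :
    Measurable (fun t => ∑ n ∈ range N, rad n t • a n) :=
  Finset.measurable_sum (range N) fun n _ => (rad_measurable n).smul measurable_const

lemma SC_bound (a : ℕ → ℂ) (N : ℕ) (t : ℝ) :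
    ‖∑ n ∈ range N, rad n t • a n‖ ≤ ∑ n ∈ range N, ‖a n‖ := by
  refine (norm_sum_le _ _).trans ?_
  refine Finset.sum_le_sum fun n _ => ?_
  rw [norm_smul, Real.norm_eq_abs, abs_rad, one_mul]

lemma II_SC (a : ℕ → ℂ) (N : ℕ) :
    IntervalIntegrable (fun t => ‖∑ n ∈ range N, rad n t • a n‖) volume 0 1 := by
  refine (intervalIntegrable_const (c := ∑ n ∈ range N, ‖a n‖)).mono_fun'
    ((continuous_norm.measurable.comp (SC_measurable a N)).aestronglyMeasurable) ?_
  filter_upwards with t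
  rw [Real.norm_eq_abs, abs_of_nonneg (norm_nonneg _)]
  exact SC_bound a N t

lemma sqrt_add_le (p q : ℝ) (hp : 0 ≤ p) (hq : 0 ≤ q) :
    Real.sqrt (p + q) ≤ Real.sqrt p + Real.sqrt q := by
  have h : p + q ≤ (Real.sqrt p + Real.sqrt q) ^ 2 := by
    nlinarith [Real.sq_sqrt hp, Real.sq_sqrt hq, Real.sqrt_nonneg p, Real.sqrt_nonneg q,
      mul_nonneg (Real.sqrt_nonneg p) (Real.sqrt_nonneg q)]
  calc Real.sqrt (p + q) ≤ Real.sqrt ((Real.sqrt p + Real.sqrt q) ^ 2) := Real.sqrt_le_sqrt h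
    _ = Real.sqrt p + Real.sqrt q :=
        Real.sqrt_sq (by positivity)

lemma khinchin_complex (a : ℕ → ℂ) (N : ℕ) :
    Real.sqrt (∑ n ∈ range N, ‖a n‖ ^ 2)
      ≤ (2 * Real.sqrt 3) * ∫ t in (0:ℝ)..1, ‖∑ n ∈ range N, rad n t • a n‖ := by
  set SC : ℝ → ℂ := fun t => ∑ n ∈ range N, rad n t • a n with hSC
  have hre : ∀ t, (SC t).re = ∑ n ∈ range N, rad n t * (a n).re := by
    intro t
    rw [hSC]
    rw [Complex.re_sum]
    exact Finset.sum_congr rfl fun n _ => Complex.smul_re _ _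
  have him : ∀ t, (SC t).im = ∑ n ∈ range N, rad n t * (a n).im := by
    intro t
    rw [hSC]
    rw [Complex.im_sum]
    exact Finset.sum_congr rfl fun n _ => Complex.smul_im _ _
  have hIabs : IntervalIntegrable (fun t => ‖SC t‖) volume 0 1 := II_SC a N
  have hIre : IntervalIntegrable (fun t => |∑ n ∈ range N, rad n t * (a n).re|) volume 0 1 :=
    II_comp (G := fun y => |y|) continuous_abs _ N 0 1
  have hIim : IntervalIntegrable (fun t => |∑ n ∈ range N, rad n t * (a n).im|) volume 0 1 :=
    II_comp (G := fun y => |y|) continuous_abs _ N 0 1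
  have hmono1 : (∫ t in (0:ℝ)..1, |∑ n ∈ range N, rad n t * (a n).re|)
      ≤ ∫ t in (0:ℝ)..1, ‖SC t‖ := by
    refine intervalIntegral.integral_mono_on (by norm_num) hIre hIabs fun t _ => ?_
    rw [← hre t]
    exact Complex.abs_re_le_norm _
  have hmono2 : (∫ t in (0:ℝ)..1, |∑ n ∈ range N, rad n t * (a n).im|)
      ≤ ∫ t in (0:ℝ)..1, ‖SC t‖ := by
    refine intervalIntegral.integral_mono_on (by norm_num) hIim hIabs fun t _ => ?_
    rw [← him t]
    exact Complex.abs_im_le_norm _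
  have hkre := khinchin_real (fun n => (a n).re) N
  have hkim := khinchin_real (fun n => (a n).im) N
  have habs2 : (∑ n ∈ range N, ‖a n‖ ^ 2)
      = (∑ n ∈ range N, (a n).re ^ 2) + ∑ n ∈ range N, (a n).im ^ 2 := by
    rw [← Finset.sum_add_distrib]
    refine Finset.sum_congr rfl fun n _ => ?_
    rw [Complex.sq_norm, Complex.normSq_apply]
    ring
  have h1 : Real.sqrt (∑ n ∈ range N, ‖a n‖ ^ 2)
      ≤ Real.sqrt (∑ n ∈ range N, (a n).re ^ 2) + Real.sqrt (∑ n ∈ range N, (a n).im ^ 2) := by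
    rw [habs2]
    exact sqrt_add_le _ _ (Finset.sum_nonneg fun n _ => sq_nonneg _)
      (Finset.sum_nonneg fun n _ => sq_nonneg _)
  have hs3 : (0:ℝ) ≤ Real.sqrt 3 := Real.sqrt_nonneg 3
  calc Real.sqrt (∑ n ∈ range N, ‖a n‖ ^ 2)
      ≤ Real.sqrt (∑ n ∈ range N, (a n).re ^ 2) + Real.sqrt (∑ n ∈ range N, (a n).im ^ 2) := h1
    _ ≤ Real.sqrt 3 * (∫ t in (0:ℝ)..1, |∑ n ∈ range N, rad n t * (a n).re|)
        + Real.sqrt 3 * (∫ t in (0:ℝ)..1, |∑ n ∈ range N, rad n t * (a n).im|) := by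
        exact add_le_add hkre hkim
    _ ≤ Real.sqrt 3 * (∫ t in (0:ℝ)..1, ‖SC t‖)
        + Real.sqrt 3 * (∫ t in (0:ℝ)..1, ‖SC t‖) :=
        add_le_add (mul_le_mul_of_nonneg_left hmono1 hs3) (mul_le_mul_of_nonneg_left hmono2 hs3)
    _ = (2 * Real.sqrt 3) * ∫ t in (0:ℝ)..1, ‖SC t‖ := by ring

lemma l1_le_sqrt (N : ℕ) :
    (∫ t in (0:ℝ)..1, |∑ n ∈ range N, rad n t * 1|) ≤ Real.sqrt N := by
  set S : ℝ → ℝ := fun t => ∑ n ∈ range N, rad n t * 1 with hS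
  have hA0 : 0 ≤ ∫ t in (0:ℝ)..1, |S t| :=
    intervalIntegral.integral_nonneg (by norm_num) fun u _ => abs_nonneg _
  have i1 : IntervalIntegrable (fun t => |S t| ^ 2) volume 0 1 :=
    II_comp (G := fun y => |y| ^ 2) (continuous_abs.pow 2) _ N 0 1
  have i2 : IntervalIntegrable (fun t => (1:ℝ) ^ 2) volume 0 1 := intervalIntegrable_const
  have i3 : IntervalIntegrable (fun t => |S t| * 1) volume 0 1 :=
    II_comp (G := fun y => |y| * 1) (continuous_abs.mul continuous_const) _ N 0 1
  have h := cs_int i1 i2 i3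
  have e1 : (fun t => |S t| * 1) = fun t => |S t| := by funext t; rw [mul_one]
  have e2 : (fun t => |S t| ^ 2) = fun t => S t ^ 2 := by funext t; rw [sq_abs]
  rw [e1, e2, integral_S_sq (fun _ => 1) N] at h
  simp only [one_pow, Finset.sum_const, Finset.card_range, nsmul_eq_mul, mul_one,
    intervalIntegral.integral_const, smul_eq_mul, sub_zero, one_mul] at h
  calc (∫ t in (0:ℝ)..1, |S t|)
      = Real.sqrt ((∫ t in (0:ℝ)..1, |S t|) ^ 2) := (Real.sqrt_sq hA0).symm
    _ ≤ Real.sqrt N := Real.sqrt_le_sqrt (by linarith [h])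

/-- Hartman's theorem: any exponent `σ₀` with `∑_{n<N} |aₙ| ≤ c N^{σ₀} ∫₀¹ |∑ rₙ(t) aₙ| dt`
for all `N` and all tuples satisfies `σ₀ ≥ 1/2` (take `aₙ = 1`, using Khinchin's upper
bound `∫₀¹ |∑ rₙ aₙ| ≤ (∑|aₙ|²)^{1/2}`); consequently the strip width
`S^rad_{c→a}(ℂ)`, in its Maurizi–Queffélec reformulation as an infimum of admissible
exponents, equals `1/2`. -/
theorem hartman_half :
    (∀ σ₀ c : ℝ, 0 < c →
      (∀ (N : ℕ) (a : ℕ → ℂ),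
        ∑ n ∈ Finset.range N, ‖a n‖ ≤
          c * (N : ℝ) ^ σ₀ *
            ∫ t in (0:ℝ)..1, ‖∑ n ∈ Finset.range N, rad n t • a n‖) →
      1 / 2 ≤ σ₀) ∧
    sInf {σ : ℝ | 0 < σ ∧ ∃ c > (0:ℝ), ∀ (N : ℕ) (a : ℕ → ℂ),
        ∑ n ∈ Finset.range N, ‖a n‖ ≤
          c * (N : ℝ) ^ σ *
            ∫ t in (0:ℝ)..1, ‖∑ n ∈ Finset.range N, rad n t • a n‖} =
      1 / 2 := by
  have part1 : ∀ σ₀ c : ℝ, 0 < c →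
      (∀ (N : ℕ) (a : ℕ → ℂ),
        ∑ n ∈ Finset.range N, ‖a n‖ ≤
          c * (N : ℝ) ^ σ₀ *
            ∫ t in (0:ℝ)..1, ‖∑ n ∈ Finset.range N, rad n t • a n‖) →
      1 / 2 ≤ σ₀ := by
    intro σ₀ c hc h
    by_contra hσ
    push_neg at hσ
    have hpos : (0:ℝ) < 1/2 - σ₀ := by linarith
    obtain ⟨N, hN, hN1⟩ :=
      (((tendsto_rpow_atTop hpos).comp
        tendsto_natCast_atTop_atTop).eventually_gt_atTop c |>.and
          (eventually_ge_atTop 1)).exists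
    have hNR : (1:ℝ) ≤ (N:ℝ) := by exact_mod_cast hN1
    have hNpos : (0:ℝ) < (N:ℝ) := by linarith
    have h1 := h N (fun _ => 1)
    have hint : ∀ t : ℝ, ‖∑ n ∈ Finset.range N, rad n t • (1:ℂ)‖
        = |∑ n ∈ range N, rad n t * 1| := by
      intro t
      have : (∑ n ∈ Finset.range N, rad n t • (1:ℂ))
          = ((∑ n ∈ range N, rad n t * 1 : ℝ) : ℂ) := by
        push_cast
        try refine Finset.sum_congr rfl fun n _ => ?_
        try rw [Complex.real_smul]
        try push_cast
        try ring
      rw [this, Complex.norm_real, Real.norm_eq_abs]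
    simp only [hint] at h1
    have hLHS : ∑ n ∈ Finset.range N, ‖(fun _ => (1:ℂ)) n‖ = (N:ℝ) := by simp
    rw [hLHS] at h1
    have hcN : (0:ℝ) ≤ c * (N:ℝ) ^ σ₀ :=
      mul_nonneg hc.le (Real.rpow_nonneg hNpos.le _)
    have h2 : (N:ℝ) ≤ c * (N:ℝ) ^ σ₀ * Real.sqrt N :=
      h1.trans (mul_le_mul_of_nonneg_left (l1_le_sqrt N) hcN)
    have hsq : Real.sqrt (N:ℝ) = (N:ℝ) ^ ((1:ℝ)/2) := Real.sqrt_eq_rpow _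
    have hP : (0:ℝ) < (N:ℝ) ^ σ₀ * (N:ℝ) ^ ((1:ℝ)/2) :=
      mul_pos (Real.rpow_pos_of_pos hNpos _) (Real.rpow_pos_of_pos hNpos _)
    have hNe : (N:ℝ) ^ σ₀ * (N:ℝ) ^ ((1:ℝ)/2) * (N:ℝ) ^ ((1:ℝ)/2 - σ₀) = (N:ℝ) := by
      rw [← Real.rpow_add hNpos, ← Real.rpow_add hNpos,
        show σ₀ + (1:ℝ)/2 + ((1:ℝ)/2 - σ₀) = 1 by ring, Real.rpow_one]
    rw [hsq] at h2
    have h3 : (N:ℝ) ^ σ₀ * (N:ℝ) ^ ((1:ℝ)/2) * (N:ℝ) ^ ((1:ℝ)/2 - σ₀)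
        ≤ ((N:ℝ) ^ σ₀ * (N:ℝ) ^ ((1:ℝ)/2)) * c := by
      rw [hNe]
      linarith [h2]
    have h4 : (N:ℝ) ^ ((1:ℝ)/2 - σ₀) ≤ c := by
      have := (mul_le_mul_iff_right₀ hP).mp (by linarith [h3] : ((N:ℝ) ^ σ₀ * (N:ℝ) ^ ((1:ℝ)/2))
        * ((N:ℝ) ^ ((1:ℝ)/2 - σ₀)) ≤ ((N:ℝ) ^ σ₀ * (N:ℝ) ^ ((1:ℝ)/2)) * c)
      exact this
    simp only [Function.comp_apply] at hN
    linarith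
  refine ⟨part1, ?_⟩
  set T : Set ℝ := {σ : ℝ | 0 < σ ∧ ∃ c > (0:ℝ), ∀ (N : ℕ) (a : ℕ → ℂ),
      ∑ n ∈ Finset.range N, ‖a n‖ ≤
        c * (N : ℝ) ^ σ *
          ∫ t in (0:ℝ)..1, ‖∑ n ∈ Finset.range N, rad n t • a n‖} with hT
  have hmem : (1/2 : ℝ) ∈ T := by
    refine ⟨by norm_num, 2 * Real.sqrt 3, by positivity, fun N a => ?_⟩
    have hint0 : (0:ℝ) ≤ ∫ t in (0:ℝ)..1, ‖∑ n ∈ Finset.range N, rad n t • a n‖ :=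
      intervalIntegral.integral_nonneg (by norm_num) fun u _ => norm_nonneg _
    have hstepA : ∑ n ∈ Finset.range N, ‖a n‖
        ≤ Real.sqrt N * Real.sqrt (∑ n ∈ range N, ‖a n‖ ^ 2) := by
      have hcs := sq_sum_le_card_mul_sum_sq
        (s := range N) (f := fun n => ‖a n‖)
      rw [Finset.card_range] at hcs
      have h0 : (0:ℝ) ≤ ∑ n ∈ range N, ‖a n‖ :=
        Finset.sum_nonneg fun n _ => norm_nonneg _
      calc ∑ n ∈ Finset.range N, ‖a n‖
          = Real.sqrt ((∑ n ∈ range N, ‖a n‖) ^ 2) := (Real.sqrt_sq h0).symm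
        _ ≤ Real.sqrt ((N:ℝ) * ∑ n ∈ range N, ‖a n‖ ^ 2) :=
            Real.sqrt_le_sqrt (by exact_mod_cast hcs)
        _ = Real.sqrt N * Real.sqrt (∑ n ∈ range N, ‖a n‖ ^ 2) :=
            Real.sqrt_mul (Nat.cast_nonneg N) _
    have hstepB := khinchin_complex a N
    calc ∑ n ∈ Finset.range N, ‖a n‖
        ≤ Real.sqrt N * Real.sqrt (∑ n ∈ range N, ‖a n‖ ^ 2) := hstepA
      _ ≤ Real.sqrt N * ((2 * Real.sqrt 3) *
            ∫ t in (0:ℝ)..1, ‖∑ n ∈ Finset.range N, rad n t • a n‖) :=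
          mul_le_mul_of_nonneg_left hstepB (Real.sqrt_nonneg _)
      _ = 2 * Real.sqrt 3 * (N:ℝ) ^ ((1:ℝ)/2) *
            ∫ t in (0:ℝ)..1, ‖∑ n ∈ Finset.range N, rad n t • a n‖ := by
          rw [Real.sqrt_eq_rpow]
          ring
      _ = 2 * Real.sqrt 3 * (N:ℝ) ^ (1/2 : ℝ) *
            ∫ t in (0:ℝ)..1, ‖∑ n ∈ Finset.range N, rad n t • a n‖ := by
          norm_num
  refine le_antisymm (csInf_le ⟨0, fun σ hσ => hσ.1.le⟩ hmem) ?_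
  refine le_csInf ⟨1/2, hmem⟩ fun σ hσ => ?_
  obtain ⟨hσ0, c, hc, hσc⟩ := hσ
  exact part1 σ c hc hσc
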